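/- Let Y be a standard Gaussian random variable, β > 0, h > 0. Then the map q ↦ E[tanh²(β√q·Y + h)] has a unique fixed point q₂ in [0,1], and q₂ > 0. -/

import Mathlib

open MeasureTheory ProbabilityTheory Real Filter Set

namespace LG


noncomputable def gpdf : ℝ → ℝ := ProbabilityTheory.gaussianPDFReal 0 1

lemma gpdf_eq (x : ℝ) : gpdf x = (Real.sqrt (2 * π))⁻¹ * Real.exp (- x ^ 2 / 2) := by
  simp [gpdf, gaussianPDFReal]

lemma gpdf_pos (x : ℝ) : 0 < gpdf x := gaussianPDFReal_pos 0 1 x one_ne_zero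

lemma gpdf_meas : Measurable gpdf := measurable_gaussianPDFReal 0 1

lemma gpdf_cont : Continuous gpdf := by
  have : gpdf = fun x => (Real.sqrt (2 * π))⁻¹ * Real.exp (- x ^ 2 / 2) := funext gpdf_eq
  rw [this]; continuity

lemma gpdf_even (x : ℝ) : gpdf (-x) = gpdf x := by simp [gpdf_eq]

lemma integrable_gpdf : Integrable gpdf := integrable_gaussianPDFReal 0 1

lemma hasDerivAt_gpdf (x : ℝ) : HasDerivAt gpdf (-x * gpdf x) x := by
  have h1 : HasDerivAt (fun x : ℝ => - x ^ 2 / 2) (-x) x := by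
    have := ((hasDerivAt_pow 2 x).neg).div_const 2
    refine this.congr_deriv ?_
    simp; ring
  have h2 := (h1.exp).const_mul (Real.sqrt (2 * π))⁻¹
  have hfun : gpdf = fun x => (Real.sqrt (2 * π))⁻¹ * Real.exp (- x ^ 2 / 2) := funext gpdf_eq
  rw [hfun]
  refine h2.congr_deriv ?_
  ring

lemma tendsto_gpdf_atTop : Tendsto gpdf atTop (nhds 0) := by
  have h1 : Tendsto (fun x : ℝ => - x ^ 2 / 2) atTop atBot := by
    have h0 : Tendsto (fun x : ℝ => x ^ 2 / 2) atTop atTop :=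
      (tendsto_pow_atTop two_ne_zero).atTop_div_const (by norm_num)
    have := tendsto_neg_atTop_atBot.comp h0
    simpa [Function.comp_def, neg_div] using this
  have := (Real.tendsto_exp_atBot.comp h1).const_mul (Real.sqrt (2 * π))⁻¹
  simp only [mul_zero] at this
  have hfun : gpdf = fun x => (Real.sqrt (2 * π))⁻¹ * Real.exp (- x ^ 2 / 2) := funext gpdf_eq
  rw [hfun]; exact this

lemma tendsto_gpdf_atBot : Tendsto gpdf atBot (nhds 0) := by
  have := tendsto_gpdf_atTop.comp (tendsto_neg_atBot_atTop)
  simpa [Function.comp_def, gpdf_even] using this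



lemma tanh_lt_one (x : ℝ) : Real.tanh x < 1 := by
  rw [Real.tanh_eq_sinh_div_cosh, div_lt_one (Real.cosh_pos x)]
  exact Real.sinh_lt_cosh x

lemma neg_one_lt_tanh (x : ℝ) : -1 < Real.tanh x := by
  have := tanh_lt_one (-x); rw [Real.tanh_neg] at this; linarith

lemma abs_tanh_lt_one (x : ℝ) : |Real.tanh x| < 1 :=
  abs_lt.2 ⟨neg_one_lt_tanh x, tanh_lt_one x⟩

lemma tanh_sq_lt_one (x : ℝ) : Real.tanh x ^ 2 < 1 := by
  rw [← sq_abs]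
  exact pow_lt_one₀ (abs_nonneg _) (abs_tanh_lt_one x) two_ne_zero

lemma tanh_sq_le_one (x : ℝ) : Real.tanh x ^ 2 ≤ 1 := (tanh_sq_lt_one x).le

lemma one_sub_tanh_sq (x : ℝ) : 1 - Real.tanh x ^ 2 = 1 / Real.cosh x ^ 2 := by
  have hc := Real.cosh_pos x
  rw [Real.tanh_eq_sinh_div_cosh, div_pow]
  rw [sub_eq_iff_eq_add, ← add_div, eq_div_iff (by positivity : (Real.cosh x ^ 2 : ℝ) ≠ 0)]
  nlinarith [Real.cosh_sq_sub_sinh_sq x]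

lemma one_sub_tanh_sq_pos (x : ℝ) : 0 < 1 - Real.tanh x ^ 2 := by linarith [tanh_sq_lt_one x]

lemma hasDerivAt_tanh (x : ℝ) : HasDerivAt Real.tanh (1 - Real.tanh x ^ 2) x := by
  have hfun : Real.tanh = fun y => Real.sinh y / Real.cosh y := funext Real.tanh_eq_sinh_div_cosh
  have hc := Real.cosh_pos x
  have h := (Real.hasDerivAt_sinh x).div (Real.hasDerivAt_cosh x) hc.ne'
  rw [hfun]
  refine h.congr_deriv ?_
  have hcs := Real.cosh_sq_sub_sinh_sq x
  field_simp

lemma continuous_tanh : Continuous Real.tanh := by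
  have hfun : Real.tanh = fun y => Real.sinh y / Real.cosh y := funext Real.tanh_eq_sinh_div_cosh
  rw [hfun]
  exact Real.continuous_sinh.div Real.continuous_cosh fun x => (Real.cosh_pos x).ne'

lemma tanh_pos {x : ℝ} (hx : 0 < x) : 0 < Real.tanh x := by
  rw [Real.tanh_eq_sinh_div_cosh]
  exact div_pos (by rwa [Real.sinh_pos_iff]) (Real.cosh_pos x)

lemma tanh_nonneg {x : ℝ} (hx : 0 ≤ x) : 0 ≤ Real.tanh x := by
  rcases hx.eq_or_lt with rfl | hx
  · simp [Real.tanh_zero]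
  · exact (tanh_pos hx).le

lemma strictMono_tanh : StrictMono Real.tanh := by
  intro x y hxy
  rw [Real.tanh_eq_sinh_div_cosh, Real.tanh_eq_sinh_div_cosh,
    div_lt_div_iff₀ (Real.cosh_pos x) (Real.cosh_pos y)]
  have h1 := Real.sinh_sub x y
  have h2 : Real.sinh (x - y) < 0 := by rw [Real.sinh_neg_iff]; linarith
  linarith

lemma abs_tanh (x : ℝ) : |Real.tanh x| = Real.tanh |x| := by
  rcases le_or_gt 0 x with hx | hx
  · rw [abs_of_nonneg (tanh_nonneg hx), abs_of_nonneg hx]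
  · rw [abs_of_neg hx, abs_of_neg (by simpa [Real.tanh_neg] using tanh_pos (neg_pos.2 hx) : Real.tanh x < 0), ← Real.tanh_neg]

lemma tanh_sq_mono {u v : ℝ} (h : u ^ 2 ≤ v ^ 2) : Real.tanh u ^ 2 ≤ Real.tanh v ^ 2 := by
  have habs : |u| ≤ |v| := by
    nlinarith [abs_nonneg u, abs_nonneg v, sq_abs u, sq_abs v]
  rw [← sq_abs (Real.tanh u), ← sq_abs (Real.tanh v), abs_tanh, abs_tanh]
  have := strictMono_tanh.monotone habs
  nlinarith [tanh_nonneg (abs_nonneg u), tanh_nonneg (abs_nonneg v)]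

lemma key_tanh {u : ℝ} (hu : 0 < u) : u * (1 - Real.tanh u ^ 2) < Real.tanh u := by
  have h1 : 2 * u < Real.sinh (2 * u) := Real.self_lt_sinh_iff.2 (by linarith)
  rw [Real.sinh_two_mul] at h1
  have hc := Real.cosh_pos u
  have hc2 : (0:ℝ) < Real.cosh u ^ 2 := by positivity
  rw [one_sub_tanh_sq, Real.tanh_eq_sinh_div_cosh, mul_one_div, div_lt_div_iff₀ hc2 hc]
  nlinarith

lemma core_lt {u : ℝ} (hu : u ≠ 0) :
    Real.tanh u * (u * (1 - Real.tanh u ^ 2) - Real.tanh u) < 0 := by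
  rcases hu.lt_or_gt with h | h
  · have hv := key_tanh (neg_pos.2 h)
    rw [Real.tanh_neg, neg_sq] at hv
    have ht : Real.tanh u < 0 := by
      have := tanh_pos (neg_pos.2 h); rw [Real.tanh_neg] at this; linarith
    have hin : 0 < u * (1 - Real.tanh u ^ 2) - Real.tanh u := by nlinarith
    exact mul_neg_of_neg_of_pos ht hin
  · exact mul_neg_of_pos_of_neg (tanh_pos h) (by linarith [key_tanh h])

lemma core_le (u : ℝ) : Real.tanh u * (u * (1 - Real.tanh u ^ 2) - Real.tanh u) ≤ 0 := by
  rcases eq_or_ne u 0 with rfl | hu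
  · simp [Real.tanh_zero]
  · exact (core_lt hu).le


local notation "γ" => ProbabilityTheory.gaussianReal 0 1

lemma gaussianPDF_eq : gaussianPDF 0 1 = fun x => ((gpdf x).toNNReal : ENNReal) := rfl

lemma gamma_eq : (γ : Measure ℝ) = volume.withDensity (fun x => ((gpdf x).toNNReal : ENNReal)) := by
  rw [gaussianReal_of_var_ne_zero 0 one_ne_zero, gaussianPDF_eq]

lemma integral_gauss (g : ℝ → ℝ) : ∫ y, g y ∂γ = ∫ y, gpdf y * g y := by
  rw [gamma_eq, integral_withDensity_eq_integral_smul gpdf_meas.real_toNNReal g]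
  congr 1
  funext y
  rw [NNReal.smul_def, Real.coe_toNNReal _ (gpdf_pos y).le, smul_eq_mul]

lemma integrable_gauss_iff (g : ℝ → ℝ) :
    Integrable g γ ↔ Integrable (fun y => gpdf y * g y) volume := by
  rw [gamma_eq, integrable_withDensity_iff_integrable_smul gpdf_meas.real_toNNReal]
  have hfun : (fun x => (gpdf x).toNNReal • g x) = fun y => gpdf y * g y := by
    funext y
    rw [NNReal.smul_def, Real.coe_toNNReal _ (gpdf_pos y).le, smul_eq_mul]
  rw [hfun]

lemma integrable_abs_mul_gpdf : Integrable (fun y => |y| * gpdf y) volume := by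
  have h := ((integrable_mul_exp_neg_mul_sq (b := (1:ℝ)/2) (by norm_num)).abs.const_mul
    ((Real.sqrt (2 * π))⁻¹))
  refine h.congr (ae_of_all _ fun y => ?_)
  simp only [gpdf_eq, abs_mul, abs_of_pos (Real.exp_pos _)]
  rw [show -((1:ℝ)/2) * y ^ 2 = - y ^ 2 / 2 by ring]
  ring

lemma integrable_gpdf_mul {g : ℝ → ℝ} (hg : Continuous g) (C₁ C₂ : ℝ)
    (hb : ∀ y, |g y| ≤ C₁ * |y| + C₂) : Integrable (fun y => gpdf y * g y) volume := by
  refine Integrable.mono' ((integrable_abs_mul_gpdf.const_mul C₁).add (integrable_gpdf.const_mul C₂))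
    ((gpdf_cont.mul hg).aestronglyMeasurable) (ae_of_all _ fun y => ?_)
  have hp := gpdf_pos y
  rw [norm_mul, Real.norm_eq_abs, Real.norm_eq_abs, abs_of_pos hp]
  have h1 : gpdf y * |g y| ≤ gpdf y * (C₁ * |y| + C₂) :=
    mul_le_mul_of_nonneg_left (hb y) hp.le
  calc gpdf y * |g y| ≤ gpdf y * (C₁ * |y| + C₂) := h1
    _ = C₁ * (|y| * gpdf y) + C₂ * gpdf y := by ring

lemma integrable_gauss_of_bound {g : ℝ → ℝ} (hg : Continuous g) (C₁ C₂ : ℝ)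
    (hb : ∀ y, |g y| ≤ C₁ * |y| + C₂) : Integrable g γ :=
  (integrable_gauss_iff g).2 (integrable_gpdf_mul hg C₁ C₂ hb)

lemma gauss_singleton (x : ℝ) : γ {x} = 0 :=
  gaussianReal_absolutelyContinuous 0 one_ne_zero (Real.volume_singleton)


section IBP

variable {a h : ℝ}

lemma cont_u (a h : ℝ) : Continuous (fun y : ℝ => a * y + h) := by continuity

lemma cont_t (a h : ℝ) : Continuous (fun y : ℝ => Real.tanh (a * y + h)) :=
  continuous_tanh.comp (cont_u a h)

lemma cont_tsq (a h : ℝ) : Continuous (fun y : ℝ => Real.tanh (a * y + h) ^ 2) :=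
  (cont_t a h).pow 2

lemma cont_ts (a h : ℝ) :
    Continuous (fun y : ℝ => Real.tanh (a * y + h) * (1 - Real.tanh (a * y + h) ^ 2)) :=
  (cont_t a h).mul (continuous_const.sub (cont_tsq a h))

lemma bnd_tsq (a h : ℝ) (y : ℝ) : |Real.tanh (a * y + h) ^ 2| ≤ (0:ℝ) * |y| + 1 := by
  rw [abs_of_nonneg (sq_nonneg _)]
  simpa using tanh_sq_le_one (a * y + h)

lemma abs_ts_le_one (u : ℝ) : |Real.tanh u * (1 - Real.tanh u ^ 2)| ≤ 1 := by
  rw [abs_mul]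
  have h1 := abs_tanh_lt_one u
  have h2 : |1 - Real.tanh u ^ 2| ≤ 1 := by
    rw [abs_of_nonneg (one_sub_tanh_sq_pos u).le]
    nlinarith [sq_nonneg (Real.tanh u)]
  nlinarith [abs_nonneg (Real.tanh u), abs_nonneg (1 - Real.tanh u ^ 2)]

/-- Integration by parts for the Gaussian measure. -/
lemma ibp (ha : 0 < a) (h : ℝ) :
    ∫ y, y * Real.tanh (a * y + h) ^ 2 ∂γ
      = 2 * a * ∫ y, Real.tanh (a * y + h) * (1 - Real.tanh (a * y + h) ^ 2) ∂γ := by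
  set T : ℝ → ℝ := fun y => Real.tanh (a * y + h) with hT
  set W : ℝ → ℝ := fun y => gpdf y * (y * T y ^ 2) - gpdf y * (2 * a * (T y * (1 - T y ^ 2)))
    with hW
  set H : ℝ → ℝ := fun y => -(gpdf y * T y ^ 2) with hH
  have hderiv : ∀ y : ℝ, HasDerivAt H (W y) y := by
    intro y
    have hu : HasDerivAt (fun y : ℝ => a * y + h) a y := by
      simpa using ((hasDerivAt_id y).const_mul a).add_const h
    have ht : HasDerivAt T ((1 - T y ^ 2) * a) y := (hasDerivAt_tanh (a * y + h)).comp (h := fun y : ℝ => a * y + h) y hu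
    have ht2 : HasDerivAt (fun y => T y ^ 2) (2 * T y ^ 1 * ((1 - T y ^ 2) * a)) y := ht.pow 2
    have hprod := ((hasDerivAt_gpdf y).mul ht2).neg
    refine hprod.congr_deriv ?_
    simp only [hW, pow_one]
    ring
  have hWint : Integrable W volume := by
    refine (integrable_gpdf_mul ?_ 1 0 ?_).sub (integrable_gpdf_mul ?_ 0 (2 * a) ?_)
    · exact continuous_id.mul (cont_tsq a h)
    · intro y
      rw [abs_mul]
      have := bnd_tsq a h y
      have h2 : |T y ^ 2| ≤ 1 := by simpa using this
      nlinarith [abs_nonneg y]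
    · exact continuous_const.mul (cont_ts a h)
    · intro y
      rw [abs_mul, abs_mul]
      have h2 := abs_ts_le_one (a * y + h)
      have : |(2:ℝ)| * |a| = 2 * a := by rw [abs_of_pos ha]; norm_num
      rw [this]
      nlinarith [abs_nonneg y, ha]
  have hHbound : ∀ y, -gpdf y ≤ H y ∧ H y ≤ gpdf y := by
    intro y
    have hp := gpdf_pos y
    have h1 : T y ^ 2 ≤ 1 := tanh_sq_le_one _
    have h2 : 0 ≤ T y ^ 2 := sq_nonneg _
    constructor <;> simp only [hH] <;> nlinarith
  have hHtop : Tendsto H atTop (nhds 0) :=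
    tendsto_of_tendsto_of_tendsto_of_le_of_le (by simpa using tendsto_gpdf_atTop.neg)
      tendsto_gpdf_atTop (fun y => (hHbound y).1) (fun y => (hHbound y).2)
  have hHbot : Tendsto H atBot (nhds 0) :=
    tendsto_of_tendsto_of_tendsto_of_le_of_le (by simpa using tendsto_gpdf_atBot.neg)
      tendsto_gpdf_atBot (fun y => (hHbound y).1) (fun y => (hHbound y).2)
  have hIoi : ∫ y in Ioi (0:ℝ), W y = 0 - H 0 := by
    refine integral_Ioi_of_hasDerivAt_of_tendsto ?_ (fun x _ => hderiv x)
      hWint.integrableOn hHtop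
    exact (hderiv 0).continuousAt.continuousWithinAt
  have hIic : ∫ y in Iic (0:ℝ), W y = H 0 - 0 := by
    refine integral_Iic_of_hasDerivAt_of_tendsto ?_ (fun x _ => hderiv x)
      hWint.integrableOn hHbot
    exact (hderiv 0).continuousAt.continuousWithinAt
  have hWzero : ∫ y, W y = 0 := by
    rw [← intervalIntegral.integral_Iic_add_Ioi (b := (0:ℝ)) hWint.integrableOn hWint.integrableOn, hIic, hIoi]
    ring
  have hint1 : Integrable (fun y => gpdf y * (y * T y ^ 2)) volume := by
    refine integrable_gpdf_mul (continuous_id.mul (cont_tsq a h)) 1 0 fun y => ?_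
    rw [abs_mul]
    have h2 : |T y ^ 2| ≤ 1 := by simpa using bnd_tsq a h y
    nlinarith [abs_nonneg y]
  have hint2 : Integrable (fun y => gpdf y * (2 * a * (T y * (1 - T y ^ 2)))) volume := by
    refine integrable_gpdf_mul (continuous_const.mul (cont_ts a h)) 0 (2 * a) fun y => ?_
    rw [abs_mul]
    have h2 := abs_ts_le_one (a * y + h)
    have : |(2:ℝ) * a| = 2 * a := by rw [abs_of_pos (by linarith)]
    rw [this]
    nlinarith [ha]
  have hsub : (∫ y, gpdf y * (y * T y ^ 2)) - ∫ y, gpdf y * (2 * a * (T y * (1 - T y ^ 2))) = 0 := by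
    rw [← integral_sub hint1 hint2]
    exact hWzero
  rw [integral_gauss, integral_gauss]
  have hpull : ∫ y, gpdf y * (2 * a * (T y * (1 - T y ^ 2)))
      = 2 * a * ∫ y, gpdf y * (T y * (1 - T y ^ 2)) := by
    rw [← integral_const_mul]
    congr 1
    funext y
    ring
  rw [← hpull]
  linarith [hsub]

lemma sym_nonneg (ha : 0 < a) (hh : 0 < h) :
    0 ≤ ∫ y, y * Real.tanh (a * y + h) ^ 2 ∂γ := by
  rw [integral_gauss]
  set V : ℝ → ℝ := fun y => gpdf y * (y * Real.tanh (a * y + h) ^ 2) with hV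
  have hVint : Integrable V volume := by
    refine integrable_gpdf_mul (continuous_id.mul (cont_tsq a h)) 1 0 fun y => ?_
    rw [abs_mul]
    have h2 : |Real.tanh (a * y + h) ^ 2| ≤ 1 := by simpa using bnd_tsq a h y
    nlinarith [abs_nonneg y]
  have hVnegint : Integrable (fun y => V (-y)) volume := by
    have hfun : (fun y => V (-y)) = fun y => gpdf y * (-y * Real.tanh (-(a * y) + h) ^ 2) := by
      funext y
      simp only [hV, gpdf_even, mul_neg]
    rw [hfun]
    have hc1 : Continuous fun y : ℝ => -(a * y) + h :=
      ((continuous_const.mul continuous_id).neg).add continuous_const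
    refine integrable_gpdf_mul (continuous_id.neg.mul ((continuous_tanh.comp hc1).pow 2)) 1 0
      fun y => ?_
    rw [abs_mul]
    have h2 : |Real.tanh (-(a * y) + h) ^ 2| ≤ 1 := by
      rw [abs_of_nonneg (sq_nonneg _)]; exact tanh_sq_le_one _
    rw [abs_neg]
    nlinarith [abs_nonneg y]
  rw [← intervalIntegral.integral_Iic_add_Ioi (b := (0:ℝ)) hVint.integrableOn hVint.integrableOn]
  have hIic : ∫ y in Iic (0:ℝ), V y = ∫ y in Ioi (0:ℝ), V (-y) := by
    have := integral_comp_neg_Iic (0:ℝ) (fun x => V (-x))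
    simpa using this
  rw [hIic, ← integral_add hVnegint.integrableOn hVint.integrableOn]
  refine setIntegral_nonneg measurableSet_Ioi fun y hy => ?_
  have hy0 : 0 < y := hy
  have hp := gpdf_pos y
  have hsum : V (-y) + V y
      = gpdf y * (y * (Real.tanh (a * y + h) ^ 2 - Real.tanh (-(a * y) + h) ^ 2)) := by
    simp only [hV, gpdf_even, mul_neg, neg_mul]
    ring
  rw [hsum]
  have hmono : Real.tanh (-(a * y) + h) ^ 2 ≤ Real.tanh (a * y + h) ^ 2 := by
    apply tanh_sq_mono
    nlinarith [mul_pos (mul_pos ha hy0) hh]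
  have : 0 ≤ y * (Real.tanh (a * y + h) ^ 2 - Real.tanh (-(a * y) + h) ^ 2) := by
    apply mul_nonneg hy0.le
    linarith
  exact mul_nonneg hp.le this

lemma ts_nonneg (ha : 0 < a) (hh : 0 < h) :
    0 ≤ ∫ y, Real.tanh (a * y + h) * (1 - Real.tanh (a * y + h) ^ 2) ∂γ := by
  have h1 := ibp ha h
  have h2 := sym_nonneg ha hh
  nlinarith

end IBP


section Main

variable {β h : ℝ}

noncomputable def F (β h q : ℝ) : ℝ :=
  ∫ y, Real.tanh (β * Real.sqrt q * y + h) ^ 2 ∂(gaussianReal 0 1)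

noncomputable def Fd (β h q : ℝ) : ℝ :=
  ∫ y, (β / Real.sqrt q) *
    (y * (Real.tanh (β * Real.sqrt q * y + h) * (1 - Real.tanh (β * Real.sqrt q * y + h) ^ 2)))
    ∂(gaussianReal 0 1)

lemma integrable_tsq (a h : ℝ) : Integrable (fun y => Real.tanh (a * y + h) ^ 2) γ :=
  integrable_gauss_of_bound (cont_tsq a h) 0 1 (bnd_tsq a h)

lemma F_cont (β h : ℝ) : Continuous (F β h) := by
  apply continuous_of_dominated (bound := fun _ : ℝ => (1:ℝ))
  · exact fun q => (cont_tsq (β * Real.sqrt q) h).aestronglyMeasurable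
  · intro q
    refine ae_of_all _ fun y => ?_
    rw [Real.norm_eq_abs, abs_of_nonneg (sq_nonneg _)]
    exact tanh_sq_le_one _
  · exact integrable_const 1
  · refine ae_of_all _ fun y => ?_
    have : Continuous fun q : ℝ => β * Real.sqrt q * y + h :=
      (((continuous_const.mul Real.continuous_sqrt).mul continuous_const).add continuous_const)
    exact (continuous_tanh.comp this).pow 2

lemma F_zero : F β h 0 = Real.tanh h ^ 2 := by
  rw [F]
  simp only [Real.sqrt_zero, mul_zero, zero_mul, zero_add]
  simp [integral_const]

lemma F_lt_one (β h q : ℝ) : F β h q < 1 := by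
  set a := β * Real.sqrt q
  have hint := integrable_tsq a h
  have h1 : 0 < ∫ y, (1 - Real.tanh (a * y + h) ^ 2) ∂γ := by
    rw [integral_pos_iff_support_of_nonneg]
    · have hsupp : Function.support (fun y => 1 - Real.tanh (a * y + h) ^ 2) = univ := by
        refine eq_univ_of_forall fun y => ?_
        exact (sub_pos.2 (tanh_sq_lt_one (a * y + h))).ne'
      rw [hsupp]
      simp
    · exact fun y => sub_nonneg.2 (tanh_sq_le_one _)
    · exact (integrable_const 1).sub hint
  have h2 : ∫ y, (1 - Real.tanh (a * y + h) ^ 2) ∂γ = 1 - F β h q := by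
    rw [integral_sub (integrable_const 1) hint, integral_const]
    simp [F]
    rfl
  rw [h2] at h1
  linarith

lemma fix_pos (hh : 0 < h) {q : ℝ} (hq : q ∈ Icc (0:ℝ) 1) (hfix : F β h q = q) : 0 < q := by
  rcases hq.1.eq_or_lt with rfl | hpos
  · exfalso
    rw [F_zero] at hfix
    nlinarith [tanh_pos hh]
  · exact hpos

lemma hasDerivAt_F (hβ : 0 < β) {q₀ : ℝ} (hq : 0 < q₀) :
    HasDerivAt (F β h) (Fd β h q₀) q₀ := by
  set G' : ℝ → ℝ → ℝ := fun q y => (β / Real.sqrt q) *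
    (y * (Real.tanh (β * Real.sqrt q * y + h) * (1 - Real.tanh (β * Real.sqrt q * y + h) ^ 2)))
    with hG'
  have hball : ∀ q ∈ Metric.ball q₀ (q₀ / 2), q₀ / 2 < q := by
    intro q hq'
    rw [Metric.mem_ball, Real.dist_eq, abs_sub_lt_iff] at hq'
    linarith [hq'.2]
  have hsq2 : 0 < Real.sqrt (q₀ / 2) := Real.sqrt_pos.2 (by linarith)
  have main := hasDerivAt_integral_of_dominated_loc_of_deriv_le (μ := γ)
    (F := fun q y => Real.tanh (β * Real.sqrt q * y + h) ^ 2) (F' := G')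
    (x₀ := q₀) (s := Metric.ball q₀ (q₀ / 2)) (bound := fun y => (β / Real.sqrt (q₀ / 2)) * |y|)
    (Metric.ball_mem_nhds _ (by positivity))
    (Eventually.of_forall fun q => (cont_tsq (β * Real.sqrt q) h).aestronglyMeasurable)
    (integrable_tsq (β * Real.sqrt q₀) h)
    ((continuous_const.mul (continuous_id.mul (cont_ts (β * Real.sqrt q₀) h))).aestronglyMeasurable)
    (ae_of_all _ fun y q hq' => ?_) ?_ (ae_of_all _ fun y q hq' => ?_)
  · exact main.2
  · -- bound
    have hqpos : 0 < q := lt_trans (by linarith) (hball q hq')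
    have hsq : 0 < Real.sqrt q := Real.sqrt_pos.2 hqpos
    have hmono : Real.sqrt (q₀ / 2) ≤ Real.sqrt q := Real.sqrt_le_sqrt (hball q hq').le
    have hdiv : β / Real.sqrt q ≤ β / Real.sqrt (q₀ / 2) := by gcongr
    have hts := abs_ts_le_one (β * Real.sqrt q * y + h)
    rw [hG']
    simp only [Real.norm_eq_abs]
    rw [abs_mul, abs_mul, abs_of_pos (div_pos hβ hsq)]
    calc β / Real.sqrt q * (|y| * |Real.tanh (β * Real.sqrt q * y + h) *
          (1 - Real.tanh (β * Real.sqrt q * y + h) ^ 2)|)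
        ≤ β / Real.sqrt q * (|y| * 1) := by
          refine mul_le_mul_of_nonneg_left ?_ (div_pos hβ hsq).le
          exact mul_le_mul_of_nonneg_left hts (abs_nonneg y)
      _ = β / Real.sqrt q * |y| := by ring
      _ ≤ β / Real.sqrt (q₀ / 2) * |y| := mul_le_mul_of_nonneg_right hdiv (abs_nonneg y)
  · -- bound integrable
    refine integrable_gauss_of_bound (continuous_const.mul continuous_abs)
      (β / Real.sqrt (q₀ / 2)) 0 fun y => ?_
    rw [abs_mul, abs_abs, abs_of_pos (div_pos hβ hsq2)]
    simp
  · -- differentiability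
    have hqpos : 0 < q := lt_trans (by linarith) (hball q hq')
    have hsq : 0 < Real.sqrt q := Real.sqrt_pos.2 hqpos
    have hsqrt : HasDerivAt (fun q : ℝ => β * Real.sqrt q * y + h)
        (β * (1 / (2 * Real.sqrt q)) * y) q :=
      (((Real.hasDerivAt_sqrt hqpos.ne').const_mul β).mul_const y).add_const h
    have htan := (hasDerivAt_tanh (β * Real.sqrt q * y + h)).comp q hsqrt
    have hpow := htan.pow 2
    refine hpow.congr_deriv ?_
    rw [hG']
    simp only [pow_one, Function.comp_apply]
    field_simp
    ring

lemma key_ineq (hβ : 0 < β) (hh : 0 < h) {q : ℝ} (hq : 0 < q) :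
    q * Fd β h q - F β h q < 0 := by
  set a := β * Real.sqrt q with ha
  have hsq : 0 < Real.sqrt q := Real.sqrt_pos.2 hq
  have hapos : 0 < a := mul_pos hβ hsq
  have hdiv : β / Real.sqrt q = a / q := by
    rw [div_eq_div_iff hsq.ne' hq.ne', ha, mul_assoc, Real.mul_self_sqrt hq.le]
  have hqd : q * Fd β h q
      = ∫ y, (a * y) * (Real.tanh (a * y + h) * (1 - Real.tanh (a * y + h) ^ 2)) ∂γ := by
    rw [Fd, ← integral_const_mul]
    congr 1
    funext y
    rw [hdiv]
    field_simp
    rw [ha]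
    ring
  have hint1 : Integrable
      (fun y => (a * y) * (Real.tanh (a * y + h) * (1 - Real.tanh (a * y + h) ^ 2))) γ := by
    refine integrable_gauss_of_bound
      ((continuous_const.mul continuous_id).mul (cont_ts a h)) a 0 fun y => ?_
    rw [abs_mul, abs_mul, abs_of_pos hapos]
    have := abs_ts_le_one (a * y + h)
    nlinarith [abs_nonneg y, mul_nonneg hapos.le (abs_nonneg y)]
  have hint2 := integrable_tsq a h
  have hint3 : Integrable
      (fun y => Real.tanh (a * y + h) * (1 - Real.tanh (a * y + h) ^ 2)) γ :=
    integrable_gauss_of_bound (cont_ts a h) 0 1 fun y => by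
      simpa using abs_ts_le_one (a * y + h)
  have hcoreint : Integrable (fun y => Real.tanh (a * y + h) *
      ((a * y + h) * (1 - Real.tanh (a * y + h) ^ 2) - Real.tanh (a * y + h))) γ := by
    refine integrable_gauss_of_bound ?_ a (h + 1) fun y => ?_
    · exact (cont_t a h).mul (((cont_u a h).mul
        (continuous_const.sub (cont_tsq a h))).sub (cont_t a h))
    · have h1 := abs_tanh_lt_one (a * y + h)
      have h2 : |1 - Real.tanh (a * y + h) ^ 2| ≤ 1 := by
        rw [abs_of_nonneg (one_sub_tanh_sq_pos _).le]
        nlinarith [sq_nonneg (Real.tanh (a * y + h))]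
      have h3 : |a * y + h| ≤ a * |y| + h := by
        calc |a * y + h| ≤ |a * y| + |h| := abs_add_le _ _
          _ = a * |y| + h := by rw [abs_mul, abs_of_pos hapos, abs_of_pos hh]
      rw [abs_mul]
      have h4 : |(a * y + h) * (1 - Real.tanh (a * y + h) ^ 2) - Real.tanh (a * y + h)|
          ≤ (a * |y| + h) + 1 := by
        calc _ ≤ |(a * y + h) * (1 - Real.tanh (a * y + h) ^ 2)| + |Real.tanh (a * y + h)| :=
              abs_sub _ _
          _ ≤ |a * y + h| * 1 + 1 := by
              rw [abs_mul]
              exact add_le_add (mul_le_mul_of_nonneg_left h2 (abs_nonneg _)) h1.le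
          _ ≤ (a * |y| + h) + 1 := by rw [mul_one]; gcongr
      calc |Real.tanh (a * y + h)| * |(a * y + h) * (1 - Real.tanh (a * y + h) ^ 2)
            - Real.tanh (a * y + h)|
          ≤ 1 * ((a * |y| + h) + 1) := by
            apply mul_le_mul h1.le h4 (abs_nonneg _) zero_le_one
        _ = a * |y| + (h + 1) := by ring
  -- the pointwise algebraic identity
  have hidentity : ∀ y : ℝ,
      (a * y) * (Real.tanh (a * y + h) * (1 - Real.tanh (a * y + h) ^ 2))
        - Real.tanh (a * y + h) ^ 2
      = Real.tanh (a * y + h) *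
          ((a * y + h) * (1 - Real.tanh (a * y + h) ^ 2) - Real.tanh (a * y + h))
        - h * (Real.tanh (a * y + h) * (1 - Real.tanh (a * y + h) ^ 2)) := by
    intro y; ring
  have hsplit : q * Fd β h q - F β h q
      = (∫ y, Real.tanh (a * y + h) *
            ((a * y + h) * (1 - Real.tanh (a * y + h) ^ 2) - Real.tanh (a * y + h)) ∂γ)
        - h * ∫ y, Real.tanh (a * y + h) * (1 - Real.tanh (a * y + h) ^ 2) ∂γ := by
    rw [hqd]
    rw [show F β h q = ∫ y, Real.tanh (a * y + h) ^ 2 ∂γ from rfl]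
    rw [← integral_sub hint1 hint2, ← integral_const_mul, ← integral_sub hcoreint
      (hint3.const_mul h)]
    congr 1
    funext y
    exact hidentity y
  have hA : (∫ y, Real.tanh (a * y + h) *
      ((a * y + h) * (1 - Real.tanh (a * y + h) ^ 2) - Real.tanh (a * y + h)) ∂γ) < 0 := by
    have hneg : 0 < ∫ y, -(Real.tanh (a * y + h) *
        ((a * y + h) * (1 - Real.tanh (a * y + h) ^ 2) - Real.tanh (a * y + h))) ∂γ := by
      rw [integral_pos_iff_support_of_nonneg]
      · have hsub : {y : ℝ | y ≠ -h / a} ⊆ Function.support (fun y =>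
            -(Real.tanh (a * y + h) * ((a * y + h) * (1 - Real.tanh (a * y + h) ^ 2)
              - Real.tanh (a * y + h)))) := by
          intro y hy
          have hu : a * y + h ≠ 0 := by
            intro hc
            apply hy
            field_simp
            linarith
          exact neg_ne_zero.2 (core_lt hu).ne
        have hcompl : γ {y : ℝ | y ≠ -h / a} = 1 := by
          have : {y : ℝ | y ≠ -h / a} = ({-h / a} : Set ℝ)ᶜ := rfl
          rw [this, measure_compl (measurableSet_singleton _) (measure_ne_top _ _),
            gauss_singleton, measure_univ]
          simp
        calc (0 : ENNReal) < 1 := by norm_num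
          _ = γ {y : ℝ | y ≠ -h / a} := hcompl.symm
          _ ≤ γ (Function.support _) := measure_mono hsub
      · exact fun y => neg_nonneg.2 (core_le (a * y + h))
      · exact hcoreint.neg
    rw [integral_neg] at hneg
    linarith
  have hB := ts_nonneg hapos hh
  rw [hsplit]
  nlinarith [mul_nonneg hh.le hB]

lemma no_two (hβ : 0 < β) (hh : 0 < h) {q1 q2 : ℝ} (h1 : 0 < q1) (hlt : q1 < q2)
    (f1 : F β h q1 = q1) (f2 : F β h q2 = q2) : False := by
  set Φ : ℝ → ℝ := fun q => F β h q / q with hΦ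
  have hcont : ContinuousOn Φ (Icc q1 q2) :=
    ((F_cont β h).continuousOn.div continuousOn_id
      (fun x hx => ne_of_gt (lt_of_lt_of_le h1 hx.1)))
  have hderiv : ∀ x ∈ Ioo q1 q2, HasDerivAt Φ
      ((Fd β h x * x - F β h x * 1) / x ^ 2) x := fun x hx =>
    (hasDerivAt_F hβ (h1.trans hx.1)).div (hasDerivAt_id x) (ne_of_gt (h1.trans hx.1))
  obtain ⟨c, hc, hceq⟩ := exists_hasDerivAt_eq_slope Φ _ hlt hcont hderiv
  have hcpos : 0 < c := h1.trans hc.1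
  have hΦ1 : Φ q1 = 1 := by rw [hΦ]; simp only []; rw [f1, div_self h1.ne']
  have hΦ2 : Φ q2 = 1 := by rw [hΦ]; simp only []; rw [f2, div_self (h1.trans hlt).ne']
  rw [hΦ1, hΦ2] at hceq
  have hzero : Fd β h c * c - F β h c * 1 = 0 := by
    have hne : (c : ℝ) ^ 2 ≠ 0 := by positivity
    have : (Fd β h c * c - F β h c * 1) / c ^ 2 = 0 := by
      rw [hceq]; simp
    exact (div_eq_zero_iff.1 this).resolve_right hne
  have hk := key_ineq hβ hh hcpos
  nlinarith [hk, hzero]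

end Main

end LG

open MeasureTheory ProbabilityTheory in
/-- Latała–Guerra: for `β, h > 0` the map `q ↦ E[tanh²(β√q Y + h)]` has a
unique fixed point in `[0,1]`, and this fixed point is positive. -/
theorem stmt_7 (β h : ℝ) (hβ : 0 < β) (hh : 0 < h) :
    ∃ q₂ : ℝ, 0 < q₂ ∧ q₂ ∈ Set.Icc (0 : ℝ) 1 ∧
      (∫ y, Real.tanh (β * Real.sqrt q₂ * y + h) ^ 2 ∂(gaussianReal 0 1)) = q₂ ∧
      ∀ q : ℝ, q ∈ Set.Icc (0 : ℝ) 1 →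
        (∫ y, Real.tanh (β * Real.sqrt q * y + h) ^ 2 ∂(gaussianReal 0 1)) = q →
        q = q₂ := by
  classical
  obtain ⟨q₂, hmem, hfix⟩ : ∃ q ∈ Set.Icc (0:ℝ) 1, LG.F β h q = q := by
    have hcont : ContinuousOn (fun q => LG.F β h q - q) (Set.Icc 0 1) :=
      ((LG.F_cont β h).sub continuous_id).continuousOn
    have h0 : 0 < LG.F β h 0 - 0 := by
      rw [LG.F_zero, sub_zero]
      exact pow_pos (LG.tanh_pos hh) 2
    have h1 : LG.F β h 1 - 1 < 0 := sub_neg.2 (LG.F_lt_one β h 1)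
    have hiv := intermediate_value_Icc' (by norm_num : (0:ℝ) ≤ 1) hcont
    have h0mem : (0:ℝ) ∈ Set.Icc (LG.F β h 1 - 1) (LG.F β h 0 - 0) := ⟨h1.le, h0.le⟩
    obtain ⟨q, hq, heq⟩ := hiv h0mem
    exact ⟨q, hq, by linarith [heq, sub_eq_zero.1 heq]⟩
  have hqpos : 0 < q₂ := LG.fix_pos hh hmem hfix
  refine ⟨q₂, hqpos, hmem, hfix, ?_⟩
  intro q hq hfq
  have hfq' : LG.F β h q = q := hfq
  have hqpos' : 0 < q := LG.fix_pos hh hq hfq'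
  rcases lt_trichotomy q q₂ with hlt | heq | hgt
  · exact absurd (LG.no_two hβ hh hqpos' hlt hfq' hfix) not_false
  · exact heq
  · exact absurd (LG.no_two hβ hh hqpos hgt hfix hfq') not_false
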